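/- arXiv:2301.00569 — 3 statements merged into one kernel-verified Lean document; each statement's English description precedes it below -/
import Mathlib

section
/- Let (R, m) be a one-dimensional Cohen-Macaulay local ring and I an m-primary ideal. Then type(I) ≥ type(R/I). -/
open CategoryTheory IsLocalRing

universe u

/-- The length of a module, as the Krull dimension of its submodule lattice. -/
noncomputable def rlength (R : Type u) (M : Type*) [Ring R] [AddCommGroup M]
    [Module R M] : WithBot ℕ∞ :=
  Order.krullDim (Submodule R M)

/-- `dim_k Ext^1_R(k, M)` (measured as `R`-length, which agrees with `k`-dimension
since the module is killed by the maximal ideal). -/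
noncomputable def modType (R : Type u) [CommRing R] [IsLocalRing R]
    (M : ModuleCat.{u} R) : WithBot ℕ∞ :=
  rlength R (((_root_.Ext R (ModuleCat.{u} R) 1).obj
    (Opposite.op (ModuleCat.of R (ResidueField R)))).obj M)

/-- The Cohen–Macaulay type of an `m`-primary ideal `I`:  `dim_k Ext^1_R(k, I)`. -/
noncomputable def idealType (R : Type u) [CommRing R] [IsLocalRing R] (I : Ideal R) :
    WithBot ℕ∞ :=
  modType R (ModuleCat.of R I)

/-- The Cohen–Macaulay type of `R/I`: `dim_k Hom_R(k, R/I)`. -/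
noncomputable def quotType (R : Type u) [CommRing R] [IsLocalRing R] (I : Ideal R) :
    WithBot ℕ∞ :=
  rlength R (ResidueField R →ₗ[R] R ⧸ I)

/-- An ideal is `m`-primary iff its radical is the maximal ideal. -/
def IsMPrimary (R : Type u) [CommRing R] [IsLocalRing R] (I : Ideal R) : Prop :=
  I.radical = maximalIdeal R

/-- `I` is Elias if `type(I) = type(R/I)`. -/
def EliasIdeal (R : Type u) [CommRing R] [IsLocalRing R] (I : Ideal R) : Prop :=
  idealType R I = quotType R I

/-- The minimal number of generators, as `dim_k I/mI`. -/
noncomputable def mu (R : Type u) [CommRing R] [IsLocalRing R] (I : Ideal R) :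
    WithBot ℕ∞ :=
  rlength R (I ⧸ (maximalIdeal R • ⊤ : Submodule R I))

/-- `R` has Hilbert–Samuel multiplicity `e`. -/
def HasMultiplicity (R : Type u) [CommRing R] [IsLocalRing R] (e : ℕ) : Prop :=
  ∃ N : ℕ, ∀ n ≥ N,
    rlength R (R ⧸ (maximalIdeal R) ^ (n + 1)) =
      rlength R (R ⧸ (maximalIdeal R) ^ n) + (e : WithBot ℕ∞)

open CategoryTheory.Limits in
private lemma rlength_le_of_injective (R : Type u) [Ring R] {M N : Type*} [AddCommGroup M]
    [AddCommGroup N] [Module R M] [Module R N] (f : M →ₗ[R] N)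
    (hf : Function.Injective f) : rlength R M ≤ rlength R N := by
  refine Order.krullDim_le_of_strictMono (fun p => p.map f) ?_
  intro p q hpq
  exact lt_of_le_of_ne (Submodule.map_mono hpq.le)
    (fun h => hpq.ne (Submodule.map_injective_of_injective hf h))

open CategoryTheory.Limits in
private theorem aux_hom_le_ext (R : Type u) [CommRing R] [IsLocalRing R] [IsNoetherianRing R]
    (hCM : ∃ x ∈ maximalIdeal R, x ∈ nonZeroDivisors R)
    (I : Ideal R) :
    rlength R (ResidueField R →ₗ[R] R ⧸ I) ≤
      rlength R (((_root_.Ext R (ModuleCat.{u} R) 1).obj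
        (Opposite.op (ModuleCat.of R (ResidueField R)))).obj (ModuleCat.of R I)) := by
  classical
  obtain ⟨x, hxm, hxnzd⟩ := hCM
  set k : ModuleCat.{u} R := ModuleCat.of R (ResidueField R) with hk
  -- Hom(k, R) = 0
  have hom_k_R_zero : ∀ (ψ : ResidueField R →ₗ[R] R), ψ = 0 := by
    intro ψ
    ext y
    obtain ⟨y₀, rfl⟩ := Ideal.Quotient.mk_surjective y
    have hxy : x • (Ideal.Quotient.mk (maximalIdeal R) y₀) = 0 := by
      rw [Algebra.smul_def, Ideal.Quotient.algebraMap_eq,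
        Ideal.Quotient.eq_zero_iff_mem.mpr hxm, zero_mul]
    have h1 : x * ψ (Ideal.Quotient.mk (maximalIdeal R) y₀) = 0 := by
      have h1' := ψ.map_smul x (Ideal.Quotient.mk (maximalIdeal R) y₀)
      have h2 : (x • (Ideal.Quotient.mk (maximalIdeal R) y₀ : ResidueField R)) = 0 := hxy
      exact h1'.symm.trans ((congrArg ψ h2).trans (map_zero ψ))
    have := mem_nonZeroDivisors_iff_right.mp hxnzd _ (by rw [mul_comm] at h1; exact h1)
    exact this
  let A : ModuleCat.{u} R := ModuleCat.of R I
  let B : ModuleCat.{u} R := ModuleCat.of R R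
  let Cq : ModuleCat.{u} R := ModuleCat.of R (R ⧸ I)
  let f : A ⟶ B := ModuleCat.ofHom I.subtype
  let g : B ⟶ Cq := ModuleCat.ofHom I.mkQ
  have hf_inj : Function.Injective f := Subtype.val_injective
  have hg_surj : Function.Surjective g := Submodule.mkQ_surjective I
  -- the projective resolution of k
  let P : ProjectiveResolution k := HasProjectiveResolution.out.some
  let KA := P.complex.linearYonedaObj R A
  let KB := P.complex.linearYonedaObj R B
  let KC := P.complex.linearYonedaObj R Cq
  -- chain maps
  let Kf : KA ⟶ KB :=
    { f := fun n => ModuleCat.ofHom (Linear.rightComp R (P.complex.X n) f)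
      comm' := by
        intro i j hij
        ext ρ
        simp [ChainComplex.linearYonedaObj_d, ModuleCat.ofHom]
        rfl }
  let Kg : KB ⟶ KC :=
    { f := fun n => ModuleCat.ofHom (Linear.rightComp R (P.complex.X n) g)
      comm' := by
        intro i j hij
        ext ρ
        simp [ChainComplex.linearYonedaObj_d, ModuleCat.ofHom]
        rfl }
  have hKfg : Kf ≫ Kg = 0 := by
    ext n ρ
    let ρ' : P.complex.X n ⟶ A := ρ
    show (ρ' ≫ f) ≫ g = 0
    have : f ≫ g = 0 := by
      ext z
      exact (Submodule.Quotient.mk_eq_zero I).mpr z.2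
    rw [Category.assoc, this, comp_zero]
  let S : ShortComplex (HomologicalComplex (ModuleCat.{u} R) (ComplexShape.up ℕ)) :=
    ShortComplex.mk Kf Kg hKfg
  have hS : S.ShortExact := by
    apply HomologicalComplex.shortExact_of_degreewise_shortExact
    intro n
    have hz : ModuleCat.ofHom (Linear.rightComp R (P.complex.X n) f) ≫
        ModuleCat.ofHom (Linear.rightComp R (P.complex.X n) g) = 0 := by
      refine ModuleCat.hom_ext (LinearMap.ext fun ρ => ?_)
      show (ρ ≫ f) ≫ g = 0
      have hfg0 : f ≫ g = 0 := by
        ext z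
        exact (Submodule.Quotient.mk_eq_zero I).mpr z.2
      rw [Category.assoc, hfg0, comp_zero]
    show (ShortComplex.mk (ModuleCat.ofHom (Linear.rightComp R (P.complex.X n) f))
      (ModuleCat.ofHom (Linear.rightComp R (P.complex.X n) g)) hz).ShortExact
    have hepig : Epi g := (ModuleCat.epi_iff_surjective g).mpr hg_surj
    have hproj : Projective (P.complex.X n) := P.projective n
    refine ShortComplex.ShortExact.mk' ?_ ?_ ?_
    · rw [ShortComplex.moduleCat_exact_iff]
      intro ρ hρ
      let ρ' : P.complex.X n ⟶ B := ρ
      have hρ' : ρ' ≫ g = 0 := hρ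
      have hmem : ∀ z, ρ' z ∈ I := by
        intro z
        have h2 : (ρ' ≫ g) z = 0 := by rw [hρ']; rfl
        exact (Submodule.Quotient.mk_eq_zero I).mp h2
      let σ : P.complex.X n ⟶ A := ModuleCat.ofHom (LinearMap.codRestrict I ρ'.hom hmem)
      refine ⟨σ, ?_⟩
      show σ ≫ f = ρ'
      ext z
      rfl
    · rw [ModuleCat.mono_iff_injective]
      intro σ σ' h
      let σ₁ : P.complex.X n ⟶ A := σ
      let σ₂ : P.complex.X n ⟶ A := σ'
      have h' : σ₁ ≫ f = σ₂ ≫ f := h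
      show σ₁ = σ₂
      ext z
      exact ConcreteCategory.congr_hom h' z
    · rw [ModuleCat.epi_iff_surjective]
      intro ρ
      let ρ' : P.complex.X n ⟶ Cq := ρ
      refine ⟨Projective.factorThru ρ' g, ?_⟩
      show Projective.factorThru ρ' g ≫ g = ρ'
      exact Projective.factorThru_comp _ _
  -- any map P₀ → R killed by d vanishes, since Hom(k, R) = 0
  have hzero_of_dcomp : ∀ (φ : P.complex.X 0 ⟶ B), P.complex.d 1 0 ≫ φ = 0 → φ = 0 := by
    intro φ hφ
    obtain ⟨ψ', hψ'⟩ := CokernelCofork.IsColimit.desc' P.exact₀.gIsCokernel φ hφ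
    have hψ0 : ψ' = 0 := ModuleCat.hom_ext (hom_k_R_zero ψ'.hom)
    rw [← hψ', hψ0, comp_zero]
  have hKB0 : IsZero (KB.homology 0) := by
    rw [← HomologicalComplex.exactAt_iff_isZero_homology]
    rw [KB.exactAt_iff' 0 0 1 (by simp) (by simp)]
    rw [ShortComplex.moduleCat_exact_iff]
    intro φ hφ
    let φ' : P.complex.X 0 ⟶ B := φ
    have hφ' : P.complex.d 1 0 ≫ φ' = 0 := hφ
    have hφ0 := hzero_of_dcomp φ' hφ'
    exact ⟨0, (map_zero _).trans hφ0.symm⟩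
  have h01 : (ComplexShape.up ℕ).Rel 0 1 := rfl
  let δ := hS.δ 0 1 h01
  have hmonoδ : Mono δ := by
    have hex := hS.homology_exact₃ 0 1 h01
    exact hex.mono_g (hKB0.eq_of_src _ _)
  let π₀ : P.complex.X 0 ⟶ k := P.π.f 0
  have hdπ₀ : P.complex.d 1 0 ≫ π₀ = 0 := P.complex_d_comp_π_f_zero
  have hπ₀epi : Epi π₀ := inferInstanceAs (Epi (P.π.f 0))
  let T := ModuleCat.of R (ResidueField R →ₗ[R] R ⧸ I)
  let u : T ⟶ KC.X 0 := ModuleCat.ofHom ((Linear.leftComp R Cq π₀) ∘ₗ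
    (ModuleCat.homLinearEquiv (M := k) (N := Cq) (S := R)).symm.toLinearMap)
  have hu0 : u ≫ KC.d 0 1 = 0 := by
    ext φ
    let φ' : k ⟶ Cq := ModuleCat.ofHom φ
    show P.complex.d 1 0 ≫ (π₀ ≫ φ') = (0 : T ⟶ KC.X 1) φ
    rw [← Category.assoc, hdπ₀, zero_comp]
    rfl
  let w : T ⟶ KC.cycles 0 := KC.liftCycles' u 1 h01 hu0
  have hmono_u : Mono u := by
    rw [ModuleCat.mono_iff_injective]
    intro φ ψ h
    let φ' : k ⟶ Cq := ModuleCat.ofHom φ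
    let ψ' : k ⟶ Cq := ModuleCat.ofHom ψ
    have h' : π₀ ≫ φ' = π₀ ≫ ψ' := h
    exact congrArg ModuleCat.Hom.hom ((cancel_epi π₀).mp h')
  have hfac : w ≫ KC.iCycles 0 = u := KC.liftCycles_i _ _ _ _
  have hmono_w : Mono w := by
    rw [← hfac] at hmono_u
    exact mono_of_mono w (KC.iCycles 0)
  have hπiso : IsIso (KC.homologyπ 0) :=
    KC.isIso_homologyπ 0 0 (by simp) (KC.shape 0 0 (by simp))
  let E := ((_root_.Ext R (ModuleCat.{u} R) 1).obj (Opposite.op k)).obj A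
  let total : T ⟶ E := w ≫ KC.homologyπ 0 ≫ δ ≫ (P.isoExt 1 A).inv
  have hmono_total : Mono total := by
    haveI := hmono_w
    haveI := hmonoδ
    haveI := hπiso
    exact mono_comp _ _
  have hinj : Function.Injective total := (ModuleCat.mono_iff_injective total).mp hmono_total
  exact rlength_le_of_injective R total.hom hinj

theorem type_ge_type_quot (R : Type u) [CommRing R] [IsLocalRing R] [IsNoetherianRing R]
    (hdim : ringKrullDim R = 1)
    (hCM : ∃ x ∈ maximalIdeal R, x ∈ nonZeroDivisors R)
    (I : Ideal R) (hI : IsMPrimary R I) :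
    quotType R I ≤ idealType R I :=
  aux_hom_le_ext R hCM I
end

section
/- Let (R, m) be a one-dimensional Cohen-Macaulay local ring, I an m-primary ideal, and x ∈ m a non-zerodivisor. Then xI : m ⊆ (x) if and only if xI : m = x(I : m). -/
open CategoryTheory IsLocalRing

universe u

theorem colon_le_span_iff_eq (R : Type u) [CommRing R] [IsLocalRing R] [IsNoetherianRing R]
    (hdim : ringKrullDim R = 1)
    (hCM : ∃ x ∈ maximalIdeal R, x ∈ nonZeroDivisors R)
    (I : Ideal R) (hI : IsMPrimary R I)
    (x : R) (hxm : x ∈ maximalIdeal R) (hx : x ∈ nonZeroDivisors R) :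
    (Ideal.span {x} * I).colon (maximalIdeal R) ≤ Ideal.span {x} ↔
      (Ideal.span {x} * I).colon (maximalIdeal R) =
        Ideal.span {x} * (I.colon (maximalIdeal R)) := by
  constructor
  · intro h
    apply le_antisymm
    · intro r hr
      obtain ⟨s, rfl⟩ := Ideal.mem_span_singleton'.mp (h hr)
      rw [Submodule.mem_colon] at hr
      rw [mul_comm s x]
      refine Ideal.mul_mem_mul (Ideal.mem_span_singleton_self x) ?_
      rw [Submodule.mem_colon]
      intro p hp
      have h2 := hr p hp
      rw [Ideal.mem_span_singleton_mul] at h2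
      obtain ⟨b, hb, hxb⟩ := h2
      have heq : x * b = x * (p * s) := by rw [hxb]; simp [smul_eq_mul]; ring
      have hbps : b = p * s := (mul_cancel_left_mem_nonZeroDivisors hx).mp heq
      rw [smul_eq_mul, mul_comm s p, ← hbps]
      exact hb
    · intro r hr
      rw [Submodule.mem_colon]
      intro p hp
      rw [Ideal.mem_span_singleton_mul] at hr
      obtain ⟨b, hb, hxb⟩ := hr
      rw [Submodule.mem_colon] at hb
      rw [smul_eq_mul, ← hxb, mul_assoc]
      exact Ideal.mul_mem_mul (Ideal.mem_span_singleton_self x)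
        (by simpa [smul_eq_mul, mul_comm] using hb p hp)
  · intro h
    rw [h]
    exact Ideal.mul_le_left
end

section
/- Let (R, m) be a one-dimensional Cohen-Macaulay local ring and I an m-primary ideal. If I is isomorphic to R as an R-module, then I is Elias. -/
open CategoryTheory IsLocalRing

universe u

section Aux

open Opposite HomologicalComplex

variable {R : Type u} [CommRing R] [IsLocalRing R]

omit [IsLocalRing R] in
lemma rlength_congr {M N : Type*} [AddCommGroup M] [Module R M]
    [AddCommGroup N] [Module R N] (e : M ≃ₗ[R] N) : rlength R M = rlength R N :=
  Order.krullDim_eq_of_orderIso (Submodule.orderIsoMapComap e)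

variable (P : ProjectiveResolution (ModuleCat.of R (ResidueField R)))

noncomputable def mapCx {M N : ModuleCat.{u} R} (g : M ⟶ N) :
    P.complex.linearYonedaObj R M ⟶ P.complex.linearYonedaObj R N where
  f i := ModuleCat.ofHom (Linear.rightComp R (P.complex.X i) g)
  comm' i j hij := by
    ext φ
    rfl

lemma single_smul {x : R} (hx : x ∈ maximalIdeal R)
    (z : ((ChainComplex.single₀ (ModuleCat.{u} R)).obj (ModuleCat.of R (ResidueField R))).X 0) :
    x • z = 0 := by
  obtain ⟨y, rfl⟩ := Ideal.Quotient.mk_surjective (z : ResidueField R)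
  show x • (Ideal.Quotient.mk _ y) = 0
  rw [show x • (Ideal.Quotient.mk (maximalIdeal R) y) = Ideal.Quotient.mk _ (x * y) from rfl,
    Ideal.Quotient.eq_zero_iff_mem]
  exact Ideal.mul_mem_right _ _ hx

lemma mem_range_d10 {c : R} (hc : c ∈ maximalIdeal R) (p : P.complex.X 0) :
    c • p ∈ LinearMap.range (P.complex.d 1 0).hom := by
  rw [show LinearMap.range (P.complex.d 1 0).hom = LinearMap.ker (P.π.f 0).hom from
    P.exact₀.moduleCat_range_eq_ker]
  show P.π.f 0 (c • p) = 0
  rw [map_smul]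
  exact single_smul hc _

lemma exists_factor {M : ModuleCat.{u} R} {c : R} (hc : c ∈ maximalIdeal R)
    (χ : P.complex.X 1 ⟶ M) (hχ : P.complex.d 2 1 ≫ χ = 0) :
    ∃ θ : P.complex.X 0 ⟶ M, P.complex.d 1 0 ≫ θ = c • χ := by
  have hrk2 : LinearMap.range (P.complex.d 2 1).hom = LinearMap.ker (P.complex.d 1 0).hom :=
    (P.exact_succ 0).moduleCat_range_eq_ker
  have hker : LinearMap.ker (P.complex.d 1 0).hom ≤ LinearMap.ker χ.hom := by
    rw [← hrk2]
    rintro _ ⟨q, rfl⟩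
    have := congrArg (fun (f : P.complex.X 2 ⟶ M) => f q) hχ
    simpa using this
  let χ' : LinearMap.range (P.complex.d 1 0).hom →ₗ[R] M :=
    ((LinearMap.ker (P.complex.d 1 0).hom).liftQ χ.hom hker) ∘ₗ
      (LinearMap.quotKerEquivRange (P.complex.d 1 0).hom).symm.toLinearMap
  have hχ' : ∀ q : P.complex.X 1,
      χ' ⟨P.complex.d 1 0 q, LinearMap.mem_range_self _ q⟩ = χ q := by
    intro q
    have h1 : (LinearMap.quotKerEquivRange (P.complex.d 1 0).hom).symm
        ⟨P.complex.d 1 0 q, LinearMap.mem_range_self _ q⟩ =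
        Submodule.Quotient.mk q := by
      apply (LinearMap.quotKerEquivRange (P.complex.d 1 0).hom).injective
      rw [LinearEquiv.apply_symm_apply]
      rfl
    show ((LinearMap.ker (P.complex.d 1 0).hom).liftQ χ.hom hker)
        ((LinearMap.quotKerEquivRange (P.complex.d 1 0).hom).symm.toLinearMap
          ⟨P.complex.d 1 0 q, LinearMap.mem_range_self _ q⟩) = χ q
    rw [LinearEquiv.coe_coe, h1]
    rfl
  refine ⟨ModuleCat.ofHom (χ' ∘ₗ (LinearMap.codRestrict _ (LinearMap.lsmul R (P.complex.X 0) c)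
    (fun p => mem_range_d10 P hc p))), ?_⟩
  ext q
  show χ' ⟨c • (P.complex.d 1 0 q), _⟩ = (c • χ) q
  have h2 : (⟨c • (P.complex.d 1 0 q), mem_range_d10 P hc _⟩ :
      LinearMap.range (P.complex.d 1 0).hom) =
      ⟨P.complex.d 1 0 (c • q), LinearMap.mem_range_self _ _⟩ :=
    Subtype.ext (map_smul (P.complex.d 1 0).hom c q).symm
  rw [h2, hχ' (c • q), map_smul]
  rfl

/-- zero criterion for `homologyπ` at degree 1 -/
lemma homologyπ_eq_zero (K : CochainComplex (ModuleCat.{u} R) ℕ) (w : K.cycles 1)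
    (h : ∃ θ : K.X 0, K.d 0 1 θ = K.iCycles 1 w) : K.homologyπ 1 w = 0 := by
  obtain ⟨θ, hθ⟩ := h
  have hw : w = K.toCycles 0 1 θ := by
    apply (ModuleCat.mono_iff_injective (K.iCycles 1)).1 inferInstance
    show K.iCycles 1 w = (K.toCycles 0 1 ≫ K.iCycles 1) θ
    rw [K.toCycles_i]
    exact hθ.symm
  rw [hw]
  show (K.toCycles 0 1 ≫ K.homologyπ 1) θ = 0
  rw [K.toCycles_comp_homologyπ]
  rfl

variable (I : Ideal R)

/-- inclusion -/
noncomputable def iota : ModuleCat.of R I ⟶ ModuleCat.of R R := ModuleCat.ofHom I.subtype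

/-- projection -/
noncomputable def pr : ModuleCat.of R R ⟶ ModuleCat.of R (R ⧸ I) := ModuleCat.ofHom I.mkQ

lemma iota_pr_zero : iota I ≫ pr I = 0 := by
  ext x
  show Submodule.mkQ I (Submodule.subtype I x) = 0
  rw [Submodule.mkQ_apply, Submodule.Quotient.mk_eq_zero]
  exact x.2

/-- the short complex of Hom complexes -/
noncomputable def SC : ShortComplex (CochainComplex (ModuleCat.{u} R) ℕ) :=
  ShortComplex.mk (mapCx P (iota I)) (mapCx P (pr I)) (by
    ext n : 1
    apply ModuleCat.hom_ext
    apply LinearMap.ext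
    intro (φ : P.complex.X n ⟶ ModuleCat.of R ↥I)
    show (φ ≫ iota I) ≫ pr I = (0 : P.complex.X n ⟶ ModuleCat.of R ↥I) ≫ 0
    rw [CategoryTheory.Category.assoc, iota_pr_zero, CategoryTheory.Limits.comp_zero,
      CategoryTheory.Limits.zero_comp])

lemma SC_shortExact : (SC P I).ShortExact := by
  apply HomologicalComplex.shortExact_of_degreewise_shortExact
  intro i
  have hmono : Mono ((SC P I).map (HomologicalComplex.eval _ _ i)).f := by
    rw [ModuleCat.mono_iff_injective]
    show Function.Injective fun (φ : P.complex.X i ⟶ ModuleCat.of R ↥I) => φ ≫ iota I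
    intro φ φ' hh
    refine ModuleCat.hom_ext (LinearMap.ext fun p => ?_)
    exact Subtype.ext (congrArg (fun (u : P.complex.X i ⟶ ModuleCat.of R R) => u p) hh)
  have hepi : Epi ((SC P I).map (HomologicalComplex.eval _ _ i)).g := by
    rw [ModuleCat.epi_iff_surjective]
    show Function.Surjective fun (φ : P.complex.X i ⟶ ModuleCat.of R R) => φ ≫ pr I
    intro ψ
    haveI : Epi (pr I) :=
      (ModuleCat.epi_iff_surjective _).2 (Submodule.mkQ_surjective I)
    exact ⟨Projective.factorThru ψ (pr I), Projective.factorThru_comp _ _⟩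
  have hexact : ((SC P I).map (HomologicalComplex.eval _ _ i)).Exact := by
    rw [ShortComplex.moduleCat_exact_iff]
    show ∀ (ψ : P.complex.X i ⟶ ModuleCat.of R R), ψ ≫ pr I = 0 →
      ∃ φ : P.complex.X i ⟶ ModuleCat.of R ↥I, φ ≫ iota I = ψ
    intro ψ hψ2
    have hmem : ∀ p, ψ p ∈ I := by
      intro p
      have h1 : (ψ ≫ pr I) p = (0 : P.complex.X i ⟶ ModuleCat.of R (R ⧸ I)) p := by
        rw [hψ2]
      exact (Submodule.Quotient.mk_eq_zero I).1 h1
    exact ⟨ModuleCat.ofHom (LinearMap.codRestrict I ψ.hom hmem), rfl⟩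
  exact ⟨hexact⟩

lemma coe_eq_smul (e : I ≃ₗ[R] R) (a : I) :
    I.subtype a = e a • (I.subtype (e.symm 1)) := by
  have h1 : a = e a • e.symm 1 := by
    apply e.injective
    rw [map_smul, LinearEquiv.apply_symm_apply, smul_eq_mul, mul_one]
  conv_lhs => rw [h1]
  rfl

lemma homologyMap_iota_zero (e : I ≃ₗ[R] R) (hIm : I ≤ maximalIdeal R) :
    HomologicalComplex.homologyMap (mapCx P (iota I)) 1 = 0 := by
  set K := P.complex.linearYonedaObj R (ModuleCat.of R ↥I) with hK
  set K' := P.complex.linearYonedaObj R (ModuleCat.of R R) with hK'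
  rw [← CategoryTheory.cancel_epi (K.homologyπ 1), CategoryTheory.Limits.comp_zero,
    HomologicalComplex.homologyπ_naturality]
  apply ModuleCat.hom_ext
  apply LinearMap.ext
  intro z
  show K'.homologyπ 1 (HomologicalComplex.cyclesMap (mapCx P (iota I)) 1 z) = 0
  apply homologyπ_eq_zero
  obtain ⟨φ, hφ⟩ : ∃ φ : P.complex.X 1 ⟶ ModuleCat.of R ↥I, φ = K.iCycles 1 z := ⟨_, rfl⟩
  have hφc : P.complex.d 2 1 ≫ φ = 0 := by
    have h1 : (K.iCycles 1 ≫ K.d 1 2) z = (0 : K.cycles 1 ⟶ K.X 2) z := by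
      rw [K.iCycles_d]
    show P.complex.d 2 1 ≫ φ = (0 : P.complex.X 2 ⟶ ModuleCat.of R ↥I)
    rw [hφ]
    exact h1
  have hι : (φ ≫ iota I : P.complex.X 1 ⟶ ModuleCat.of R R) =
      K'.iCycles 1 (HomologicalComplex.cyclesMap (mapCx P (iota I)) 1 z) := by
    have h2 : (HomologicalComplex.cyclesMap (mapCx P (iota I)) 1 ≫ K'.iCycles 1) z =
        (K.iCycles 1 ≫ (mapCx P (iota I)).f 1) z := by
      rw [HomologicalComplex.cyclesMap_i]
    rw [hφ]
    exact h2.symm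
  set c : R := I.subtype (e.symm 1) with hc
  have hcm : c ∈ maximalIdeal R := hIm (e.symm 1).2
  obtain ⟨θ, hθ⟩ := exists_factor P hcm (φ ≫ ModuleCat.ofHom e.toLinearMap)
    (by rw [← CategoryTheory.Category.assoc, hφc, CategoryTheory.Limits.zero_comp])
  have heq : c • (φ ≫ ModuleCat.ofHom e.toLinearMap) = φ ≫ iota I := by
    apply ModuleCat.hom_ext
    apply LinearMap.ext
    intro p
    show c • (e (φ p)) = I.subtype (φ p)
    rw [coe_eq_smul I e (φ p), smul_eq_mul, smul_eq_mul, mul_comm]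
  refine ⟨θ, ?_⟩
  show P.complex.d 1 0 ≫ θ = K'.iCycles 1 (HomologicalComplex.cyclesMap (mapCx P (iota I)) 1 z)
  rw [hθ, heq, hι]

/-- kernel of `Hom(P₀,Q) → Hom(P₁,Q)` -/
noncomputable def ker0 (Q : ModuleCat.{u} R) : Submodule R (P.complex.X 0 ⟶ Q) :=
  LinearMap.ker (Linear.leftComp R Q (P.complex.d 1 0))

/-- restriction of `iCycles` -/
noncomputable def alpha (Q : ModuleCat.{u} R) :
    (P.complex.linearYonedaObj R Q).cycles 0 →ₗ[R] ker0 P Q :=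
  LinearMap.codRestrict (ker0 P Q)
    ((P.complex.linearYonedaObj R Q).iCycles 0).hom
    (by
      intro z
      simp only [ker0, LinearMap.mem_ker]
      have h1 : ((P.complex.linearYonedaObj R Q).iCycles 0 ≫
          (P.complex.linearYonedaObj R Q).d 0 1) z =
          (0 : (P.complex.linearYonedaObj R Q).cycles 0 ⟶
            (P.complex.linearYonedaObj R Q).X 1) z := by
        rw [HomologicalComplex.iCycles_d]
      exact h1)

lemma alpha_bijective (Q : ModuleCat.{u} R) : Function.Bijective (alpha P Q) := by
  set K := P.complex.linearYonedaObj R Q with hK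
  constructor
  · intro z z' h
    apply (ModuleCat.mono_iff_injective (K.iCycles 0)).1 inferInstance
    exact congrArg Subtype.val h
  · rintro ⟨θ, hθ⟩
    have hθ' : (K.d 0 1) θ = 0 := hθ
    have hnext : (ComplexShape.up ℕ).next 0 = 1 := (ComplexShape.up ℕ).next_eq' rfl
    obtain ⟨tθ, htθ⟩ : ∃ tθ : ModuleCat.of R R ⟶ K.X 0,
        tθ = ModuleCat.ofHom (LinearMap.toSpanSingleton R (P.complex.X 0 ⟶ Q) θ) := ⟨_, rfl⟩
    have hk : tθ ≫ K.d 0 1 = 0 := by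
      apply ModuleCat.hom_ext
      apply LinearMap.ext
      intro r
      show K.d 0 1 (tθ r) = 0
      have h5 : tθ r = LinearMap.toSpanSingleton R (P.complex.X 0 ⟶ Q) θ r := by rw [htθ]; rfl
      rw [h5, LinearMap.toSpanSingleton_apply]
      exact ((K.d 0 1).hom.map_smul r θ).trans (by rw [show (K.d 0 1).hom θ = 0 from hθ', smul_zero])
    refine ⟨K.liftCycles tθ 1 hnext hk (1 : R), ?_⟩
    apply Subtype.ext
    show K.iCycles 0 ((K.liftCycles tθ 1 hnext hk) (1 : R)) = θ
    have h2 : (K.liftCycles tθ 1 hnext hk ≫ K.iCycles 0) (1 : R) = tθ (1 : R) := by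
      rw [K.liftCycles_i]
    rw [show K.iCycles 0 ((K.liftCycles tθ 1 hnext hk) (1 : R)) =
      (K.liftCycles tθ 1 hnext hk ≫ K.iCycles 0) (1 : R) from rfl, h2, htθ]
    show (1 : R) • θ = θ
    rw [one_smul]

/-- surjection onto the residue field -/
noncomputable def pi0 : P.complex.X 0 ⟶ ModuleCat.of R (ResidueField R) := P.π.f 0

lemma pi0_surjective : Function.Surjective (pi0 P) := by
  have : Epi (P.π.f 0) := inferInstance
  exact (ModuleCat.epi_iff_surjective (pi0 P)).1 this

lemma ker_pi0 : LinearMap.ker (pi0 P).hom = LinearMap.range (P.complex.d 1 0).hom :=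
  P.exact₀.moduleCat_range_eq_ker.symm

/-- the map `Hom(k, Q) → ker0` -/
noncomputable def beta (Q : ModuleCat.{u} R) :
    (ResidueField R →ₗ[R] Q) →ₗ[R] ker0 P Q where
  toFun η := ⟨ModuleCat.ofHom (η ∘ₗ ((pi0 P).hom : P.complex.X 0 →ₗ[R] ResidueField R) :
      P.complex.X 0 →ₗ[R] Q), by
    apply ModuleCat.hom_ext
    apply LinearMap.ext
    intro q
    show η (pi0 P (P.complex.d 1 0 q)) = 0
    have : pi0 P (P.complex.d 1 0 q) = 0 := by
      have hm : P.complex.d 1 0 q ∈ LinearMap.ker (pi0 P).hom := by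
        rw [ker_pi0]
        exact LinearMap.mem_range_self _ q
      exact hm
    rw [this, map_zero]⟩
  map_add' η η' := Subtype.ext (ModuleCat.hom_ext (LinearMap.ext fun p => rfl))
  map_smul' r η := Subtype.ext (ModuleCat.hom_ext (LinearMap.ext fun p => rfl))

lemma beta_bijective (Q : ModuleCat.{u} R) : Function.Bijective (beta P Q) := by
  constructor
  · intro η η' h
    apply LinearMap.ext
    intro y
    obtain ⟨p, rfl⟩ := pi0_surjective P y
    have := congrArg (fun (u : ker0 P Q) => (u : P.complex.X 0 ⟶ Q) p) h
    exact this
  · rintro ⟨θ, hθ⟩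
    have hθ' : ∀ q, θ (P.complex.d 1 0 q) = 0 := by
      intro q
      have h1 : Linear.leftComp R Q (P.complex.d 1 0) θ = 0 := hθ
      have := congrArg (fun (u : P.complex.X 1 ⟶ Q) => u q) h1
      exact this
    have hle : LinearMap.ker (pi0 P).hom ≤ LinearMap.ker θ.hom := by
      rw [ker_pi0]
      rintro _ ⟨q, rfl⟩
      exact hθ' q
    refine ⟨((LinearMap.ker (pi0 P).hom).liftQ θ.hom hle) ∘ₗ
      (LinearMap.quotKerEquivOfSurjective _ (pi0_surjective P)).symm.toLinearMap, ?_⟩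
    apply Subtype.ext
    apply ModuleCat.hom_ext
    apply LinearMap.ext
    intro p
    have hmk : (LinearMap.quotKerEquivOfSurjective _ (pi0_surjective P)).symm (pi0 P p) =
        Submodule.Quotient.mk p := by
      apply (LinearMap.quotKerEquivOfSurjective _ (pi0_surjective P)).injective
      rw [LinearEquiv.apply_symm_apply]
      simp [LinearMap.quotKerEquivOfSurjective, LinearMap.quotKerEquivRange_apply_mk,
        LinearEquiv.ofTop_apply]
    show ((LinearMap.ker (pi0 P).hom).liftQ θ.hom hle)
        ((LinearMap.quotKerEquivOfSurjective _ (pi0_surjective P)).symm.toLinearMap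
          (pi0 P p)) = θ p
    rw [LinearEquiv.coe_coe, hmk]
    rfl

/-- `H⁰(Hom(P,Q)) ≃ Hom(k, Q)` -/
noncomputable def H0equiv (Q : ModuleCat.{u} R) :
    ((P.complex.linearYonedaObj R Q).homology 0) ≃ₗ[R] (ResidueField R →ₗ[R] Q) :=
  ((CochainComplex.isoHomologyπ₀ (P.complex.linearYonedaObj R Q)).toLinearEquiv.symm.trans
    (LinearEquiv.ofBijective (alpha P Q) (alpha_bijective P Q))).trans
    (LinearEquiv.ofBijective (beta P Q) (beta_bijective P Q)).symm

lemma isZero_H0R {x : R} (hx : x ∈ maximalIdeal R) (hnzd : x ∈ nonZeroDivisors R) :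
    Limits.IsZero ((P.complex.linearYonedaObj R (ModuleCat.of R R)).homology 0) := by
  have hzero : ∀ η : ResidueField R →ₗ[R] (ModuleCat.of R R), η = 0 := by
    intro η
    apply LinearMap.ext
    intro y
    have h1 : x • y = 0 := by
      obtain ⟨r, rfl⟩ := Ideal.Quotient.mk_surjective y
      show Ideal.Quotient.mk _ (x * r) = 0
      rw [Ideal.Quotient.eq_zero_iff_mem]
      exact Ideal.mul_mem_right _ _ hx
    have h2 : x • η y = 0 := by rw [← map_smul, h1, map_zero]
    have h3 : (show R from η y) * x = 0 := by
      rw [mul_comm]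
      exact h2
    exact hnzd.2 _ h3
  haveI hsub : Subsingleton (ResidueField R →ₗ[R] (ModuleCat.of R R)) :=
    ⟨fun a b => by rw [hzero a, hzero b]⟩
  haveI := (H0equiv P (ModuleCat.of R R)).toEquiv.subsingleton
  exact ModuleCat.isZero_of_subsingleton _

end Aux

theorem elias_of_iso_self (R : Type u) [CommRing R] [IsLocalRing R] [IsNoetherianRing R]
    (hdim : ringKrullDim R = 1)
    (hCM : ∃ x ∈ maximalIdeal R, x ∈ nonZeroDivisors R)
    (I : Ideal R) (hI : IsMPrimary R I) (h : Nonempty (I ≃ₗ[R] R)) :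
    EliasIdeal R I := by
  obtain ⟨x, hxm, hxnzd⟩ := hCM
  obtain ⟨e⟩ := h
  have hIm : I ≤ maximalIdeal R := by
    rw [← hI]; exact Ideal.le_radical
  obtain ⟨P⟩ := (HasProjectiveResolution.out
    (Z := ModuleCat.of R (ResidueField R)))
  have hSE := SC_shortExact P I
  have hrel : (ComplexShape.up ℕ).Rel 0 1 := rfl
  have h0 : Limits.IsZero
      ((P.complex.linearYonedaObj R (ModuleCat.of R R)).homology 0) :=
    isZero_H0R P hxm hxnzd
  have h1 : HomologicalComplex.homologyMap (mapCx P (iota I)) 1 = 0 :=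
    homologyMap_iota_zero P I e hIm
  haveI hmono : Mono (hSE.δ 0 1 hrel) := by
    apply (hSE.homology_exact₃ 0 1 hrel).mono_g
    exact h0.eq_of_src _ _
  haveI hepi : Epi (hSE.δ 0 1 hrel) := by
    apply (hSE.homology_exact₁ 0 1 hrel).epi_f
    exact h1
  haveI : IsIso (hSE.δ 0 1 hrel) := isIso_of_mono_of_epi _
  show idealType R I = quotType R I
  unfold idealType modType quotType
  apply rlength_congr
  exact ((P.isoExt 1 (ModuleCat.of R ↥I)).toLinearEquiv.trans
    (((asIso (hSE.δ 0 1 hrel)).symm.toLinearEquiv).trans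
      (H0equiv P (ModuleCat.of R (R ⧸ I)))))
end
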